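/- Let F : [a,b] × [c,d] → ℝ with F(a,·) = 0, F(·,c) = 0, having finite (p,q)-bivariation, and let {t_i^{(k)}}, {s_j^{(k')}} be nested dyadic-refining partition sequences with mesh bounds 4·2^{-k} and 4·2^{-k'}. Suppose |Δ_iΔ_j G(x_i,y_j)| ≤ C|x_i−x_{i-1}|^{1/p̃}|y_j−y_{j-1}|^{1/q̃} with p̃, q̃ > 1, and α ∈ (0,1) satisfies α/p + 1/p̃ > 1 and (1−α)/q + 1/q̃ > 1. Then for every k ≥ 1, k' ≥ 1, the double difference of the double Riemann–Stieltjes sums satisfies |Δ_1Δ_2 S_{k,k'}| ≤ 4·C·2^{k+k'} (‖F‖_{1;p}/2^{k/p})^α (‖F‖_{2;q}/2^{k'/q})^{1−α} (2^{-k+2})^{1/p̃} (2^{-k'+2})^{1/q̃}, where S_{n,n'} = Σ_{i=1}^{2^n} Σ_{j=1}^{2^{n'}} F(t_i^{(n)}, s_j^{(n')}) Δ_iΔ_j G(t_i^{(n)}, s_j^{(n')}) and Δ_1Δ_2 S_{k,k'} = S_{k,k'} − S_{k-1,k'} − S_{k,k'-1} + S_{k-1,k'-1}. -/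

import Mathlib

open Set

noncomputable section

/-- Rectangular increment of a two-variable function. -/
def rect (H : ℝ → ℝ → ℝ) (x x' y y' : ℝ) : ℝ :=
  H x' y' - H x y' - H x' y + H x y

/-- `t` is a (monotone) partition of `[a,b]`. -/
def IsPartition {n : ℕ} (a b : ℝ) (t : Fin (n + 1) → ℝ) : Prop :=
  Monotone t ∧ t 0 = a ∧ t (Fin.last n) = b

/-- The set of `p`-variation sums of `f` over partitions of `[a,b]`. -/
def pVarSet (p a b : ℝ) (f : ℝ → ℝ) : Set ℝ :=
  {v | ∃ (n : ℕ) (t : Fin (n + 1) → ℝ), IsPartition a b t ∧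
        v = ∑ i : Fin n, |f (t i.succ) - f (t i.castSucc)| ^ p}

/-- The `p`-variation seminorm `‖f‖_{[a,b],p}`. -/
def pVarNorm (p a b : ℝ) (f : ℝ → ℝ) : ℝ :=
  sSup (pVarSet p a b f) ^ (1 / p)

def biVar1Set (p a b c d : ℝ) (F : ℝ → ℝ → ℝ) : Set ℝ :=
  {v | ∃ y₁ ∈ Icc c d, ∃ y₂ ∈ Icc c d, v = pVarNorm p a b (fun x => F x y₁ - F x y₂)}

/-- The first bivariation seminorm `‖F‖_{1;p}`. -/
def biVar1 (p a b c d : ℝ) (F : ℝ → ℝ → ℝ) : ℝ := sSup (biVar1Set p a b c d F)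

def biVar2Set (q a b c d : ℝ) (F : ℝ → ℝ → ℝ) : Set ℝ :=
  {v | ∃ x₁ ∈ Icc a b, ∃ x₂ ∈ Icc a b, v = pVarNorm q c d (fun y => F x₁ y - F x₂ y)}

/-- The second bivariation seminorm `‖F‖_{2;q}`. -/
def biVar2 (q a b c d : ℝ) (F : ℝ → ℝ → ℝ) : ℝ := sSup (biVar2Set q a b c d F)

/-- `‖F‖_{1;p} < ∞`: all the suprema involved are finite. -/
def FiniteBiVar1 (p a b c d : ℝ) (F : ℝ → ℝ → ℝ) : Prop :=
  (∀ y₁ ∈ Icc c d, ∀ y₂ ∈ Icc c d,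
      BddAbove (pVarSet p a b (fun x => F x y₁ - F x y₂))) ∧
  BddAbove (biVar1Set p a b c d F)

/-- `‖F‖_{2;q} < ∞`: all the suprema involved are finite. -/
def FiniteBiVar2 (q a b c d : ℝ) (F : ℝ → ℝ → ℝ) : Prop :=
  (∀ x₁ ∈ Icc a b, ∀ x₂ ∈ Icc a b,
      BddAbove (pVarSet q c d (fun y => F x₁ y - F x₂ y))) ∧
  BddAbove (biVar2Set q a b c d F)


open Finset in
theorem young_sum_range_two_mul (n : ℕ) (f : ℕ → ℝ) :
    ∑ i ∈ range (2 * n), f i = ∑ i ∈ range n, (f (2 * i) + f (2 * i + 1)) := by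
  induction n with
  | zero => simp
  | succ n ih =>
    rw [Nat.mul_succ, sum_range_succ, sum_range_succ, sum_range_succ, ← ih]; ring

open Finset in
theorem young_double_diff_identity (m m' : ℕ) (F G : ℝ → ℝ → ℝ) (u v : ℕ → ℝ) :
    (∑ i ∈ range (2 * m), ∑ j ∈ range (2 * m'),
        F (u (i + 1)) (v (j + 1)) * rect G (u i) (u (i + 1)) (v j) (v (j + 1)))
    - (∑ i ∈ range m, ∑ j ∈ range (2 * m'),
        F (u (2 * (i + 1))) (v (j + 1)) * rect G (u (2 * i)) (u (2 * (i + 1))) (v j) (v (j + 1)))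
    - (∑ i ∈ range (2 * m), ∑ j ∈ range m',
        F (u (i + 1)) (v (2 * (j + 1))) * rect G (u i) (u (i + 1)) (v (2 * j)) (v (2 * (j + 1))))
    + (∑ i ∈ range m, ∑ j ∈ range m',
        F (u (2 * (i + 1))) (v (2 * (j + 1))) *
          rect G (u (2 * i)) (u (2 * (i + 1))) (v (2 * j)) (v (2 * (j + 1)))) =
    ∑ i ∈ range m, ∑ j ∈ range m',
      rect F (u (2 * i + 2)) (u (2 * i + 1)) (v (2 * j + 2)) (v (2 * j + 1)) *
        rect G (u (2 * i)) (u (2 * i + 1)) (v (2 * j)) (v (2 * j + 1)) := by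
  simp only [young_sum_range_two_mul]
  simp only [← Finset.sum_sub_distrib, ← Finset.sum_add_distrib]
  refine sum_congr rfl fun i _ => ?_
  refine sum_congr rfl fun j _ => ?_
  simp only [rect, Nat.mul_add, Nat.mul_one]
  ring

open Finset in
theorem young_holder3 {ι : Type*} (S : Finset ι) (x : ι → ℝ) (hx : ∀ i ∈ S, 0 ≤ x i)
    (p q w1 w2 w3 : ℝ) (hp : 0 < p) (hq : 0 < q) (h1 : 0 < w1) (h2 : 0 < w2) (h3 : 0 ≤ w3)
    (hw : w1 + w2 + w3 = 1) (hpq : p * w1 + q * w2 = 1) :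
    ∑ i ∈ S, x i ≤
      (∑ i ∈ S, x i ^ p) ^ w1 * (∑ i ∈ S, x i ^ q) ^ w2 * (S.card : ℝ) ^ w3 := by
  set A := ∑ i ∈ S, x i ^ p with hAdef
  set B := ∑ i ∈ S, x i ^ q with hBdef
  set N := (S.card : ℝ) with hNdef
  have hA0 : 0 ≤ A := sum_nonneg fun i hi => Real.rpow_nonneg (hx i hi) p
  have hB0 : 0 ≤ B := sum_nonneg fun i hi => Real.rpow_nonneg (hx i hi) q
  by_cases hA : A = 0
  · have hx0 : ∀ i ∈ S, x i = 0 := fun i hi =>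
      (Real.rpow_eq_zero (hx i hi) hp.ne').1 <|
        (Finset.sum_eq_zero_iff_of_nonneg
          (fun i hi => Real.rpow_nonneg (hx i hi) p)).1 hA i hi
    rw [Finset.sum_eq_zero hx0, hA, Real.zero_rpow h1.ne', zero_mul, zero_mul]
  · by_cases hB : B = 0
    · have hx0 : ∀ i ∈ S, x i = 0 := fun i hi =>
        (Real.rpow_eq_zero (hx i hi) hq.ne').1 <|
          (Finset.sum_eq_zero_iff_of_nonneg
            (fun i hi => Real.rpow_nonneg (hx i hi) q)).1 hB i hi
      rw [Finset.sum_eq_zero hx0, hB, Real.zero_rpow h2.ne', mul_zero, zero_mul]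
    · have hApos : 0 < A := lt_of_le_of_ne hA0 (Ne.symm hA)
      have hBpos : 0 < B := lt_of_le_of_ne hB0 (Ne.symm hB)
      have hSne : S.Nonempty := by
        rcases S.eq_empty_or_nonempty with h | h
        · exfalso; apply hA; rw [hAdef, h, Finset.sum_empty]
        · exact h
      have hNpos : 0 < N := by
        rw [hNdef]; exact_mod_cast Finset.card_pos.2 hSne
      set K := A ^ w1 * B ^ w2 * N ^ w3 with hKdef
      have hKpos : 0 < K :=
        mul_pos (mul_pos (Real.rpow_pos_of_pos hApos _) (Real.rpow_pos_of_pos hBpos _))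
          (Real.rpow_pos_of_pos hNpos _)
      calc ∑ i ∈ S, x i
          ≤ ∑ i ∈ S, (w1 * (x i ^ p / A) + w2 * (x i ^ q / B) + w3 * (1 / N)) * K := by
            apply Finset.sum_le_sum
            intro i hi
            have hxi := hx i hi
            have key : x i = (x i ^ p / A) ^ w1 * (x i ^ q / B) ^ w2 * (1 / N) ^ w3 * K := by
              rcases eq_or_lt_of_le hxi with h0 | hpos
              · rw [← h0, Real.zero_rpow hp.ne', Real.zero_rpow hq.ne', zero_div,
                  Real.zero_rpow h1.ne', zero_mul, zero_mul, zero_mul]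
              · have hxx : x i ^ (p * w1) * x i ^ (q * w2) = x i := by
                  rw [← Real.rpow_add hpos, hpq, Real.rpow_one]
                rw [Real.div_rpow (Real.rpow_nonneg hxi p) hA0,
                  Real.div_rpow (Real.rpow_nonneg hxi q) hB0,
                  Real.div_rpow zero_le_one hNpos.le, Real.one_rpow,
                  hKdef, ← Real.rpow_mul hxi, ← Real.rpow_mul hxi]
                have hA1 : (0:ℝ) < A ^ w1 := Real.rpow_pos_of_pos hApos _
                have hB1 : (0:ℝ) < B ^ w2 := Real.rpow_pos_of_pos hBpos _
                have hN1 : (0:ℝ) < N ^ w3 := Real.rpow_pos_of_pos hNpos _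
                field_simp
                nlinarith [hxx, hA1, hB1, hN1]
            calc x i = (x i ^ p / A) ^ w1 * (x i ^ q / B) ^ w2 * (1 / N) ^ w3 * K := key
              _ ≤ (w1 * (x i ^ p / A) + w2 * (x i ^ q / B) + w3 * (1 / N)) * K :=
                  mul_le_mul_of_nonneg_right
                    (Real.geom_mean_le_arith_mean3_weighted h1.le h2.le h3
                      (by positivity) (by positivity) (one_div_nonneg.2 hNpos.le) hw) hKpos.le
      _ = K := by
          rw [← Finset.sum_mul]
          have : ∑ i ∈ S, (w1 * (x i ^ p / A) + w2 * (x i ^ q / B) + w3 * (1 / N)) = 1 := by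
            simp only [Finset.sum_add_distrib, mul_div_assoc]
            rw [← Finset.mul_sum, ← Finset.mul_sum, Finset.sum_const, nsmul_eq_mul]
            rw [← Finset.sum_div, ← Finset.sum_div, ← hAdef, ← hBdef, ← hNdef,
              div_self hA, div_self hB]
            field_simp
            linarith [hw]
          rw [this, one_mul]

open Finset in
theorem young_grid_mem_pVarSet (p a b : ℝ) (g : ℝ → ℝ) (n : ℕ) (u : ℕ → ℝ)
    (hmono : ∀ i j, i ≤ j → j ≤ n → u i ≤ u j) (hu0 : u 0 = a) (hun : u n = b) :
    (∑ i ∈ range n, |g (u (i + 1)) - g (u i)| ^ p) ∈ pVarSet p a b g := by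
  refine ⟨n, fun i => u i, ⟨?_, by simpa using hu0, by simpa [Fin.last] using hun⟩, ?_⟩
  · intro i j hij
    exact hmono i j hij (Nat.lt_succ_iff.mp j.isLt)
  · rw [← Fin.sum_univ_eq_sum_range (fun i => |g (u (i + 1)) - g (u i)| ^ p) n]
    exact Finset.sum_congr rfl fun i _ => by simp [Fin.val_succ, Fin.coe_castSucc]

set_option maxHeartbeats 3200000

open Finset in
theorem young_grid_sSup_nonneg (p a b : ℝ) (g : ℝ → ℝ) (n : ℕ) (u : ℕ → ℝ)
    (hmono : ∀ i j, i ≤ j → j ≤ n → u i ≤ u j) (hu0 : u 0 = a) (hun : u n = b)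
    (hbdd : BddAbove (pVarSet p a b g)) : 0 ≤ sSup (pVarSet p a b g) :=
  le_trans (Finset.sum_nonneg fun i _ => Real.rpow_nonneg (abs_nonneg _) p)
    (le_csSup hbdd (young_grid_mem_pVarSet p a b g n u hmono hu0 hun))

open Finset in
theorem young_sum_incr_le (p a b : ℝ) (hp : 0 < p) (g : ℝ → ℝ) (m : ℕ) (u : ℕ → ℝ)
    (hmono : ∀ i j, i ≤ j → j ≤ 2 * m → u i ≤ u j) (hu0 : u 0 = a) (hun : u (2 * m) = b)
    (hbdd : BddAbove (pVarSet p a b g)) (V : ℝ) (hV : pVarNorm p a b g ≤ V) :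
    ∑ i ∈ range m, |g (u (2 * i + 2)) - g (u (2 * i + 1))| ^ p ≤ V ^ p := by
  have hsup0 : 0 ≤ sSup (pVarSet p a b g) :=
    young_grid_sSup_nonneg p a b g (2 * m) u hmono hu0 hun hbdd
  have h1 : ∑ i ∈ range m, |g (u (2 * i + 2)) - g (u (2 * i + 1))| ^ p ≤
      ∑ i ∈ range (2 * m), |g (u (i + 1)) - g (u i)| ^ p := by
    rw [young_sum_range_two_mul]
    refine Finset.sum_le_sum fun i _ => ?_
    have h21 : (2 * i + 1 + 1) = 2 * i + 2 := by ring
    rw [h21]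
    exact le_add_of_nonneg_left (Real.rpow_nonneg (abs_nonneg _) p)
  have h2 : ∑ i ∈ range (2 * m), |g (u (i + 1)) - g (u i)| ^ p ≤ sSup (pVarSet p a b g) :=
    le_csSup hbdd (young_grid_mem_pVarSet p a b g (2 * m) u hmono hu0 hun)
  have h3 : sSup (pVarSet p a b g) = pVarNorm p a b g ^ p := by
    rw [pVarNorm, ← Real.rpow_mul hsup0, one_div, inv_mul_cancel₀ hp.ne', Real.rpow_one]
  have h4 : pVarNorm p a b g ^ p ≤ V ^ p :=
    Real.rpow_le_rpow (Real.rpow_nonneg hsup0 _) hV hp.le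
  linarith

/-- per-level bound for the double difference of the dyadic
double Riemann–Stieltjes sums, with `ρ(u) = u^α`, `σ(u) = u^{1-α}` and a
Hölder-type control on `G`. -/
theorem young_dyadic_level_estimate
    (a b c d p q pt qt C α : ℝ) (hab : a < b) (hcd : c < d)
    (hp : 1 ≤ p) (hq : 1 ≤ q) (hpt : 1 < pt) (hqt : 1 < qt) (hC : 0 < C)
    (hα0 : 0 < α) (hα1 : α < 1)
    (h₁ : α / p + 1 / pt > 1) (h₂ : (1 - α) / q + 1 / qt > 1)
    (F G : ℝ → ℝ → ℝ)
    (hFa : ∀ y ∈ Icc c d, F a y = 0) (hFc : ∀ x ∈ Icc a b, F x c = 0)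
    (hF1 : FiniteBiVar1 p a b c d F) (hF2 : FiniteBiVar2 q a b c d F)
    (hG : ∀ x₁ x₂ y₁ y₂ : ℝ, a ≤ x₁ → x₁ ≤ x₂ → x₂ ≤ b → c ≤ y₁ → y₁ ≤ y₂ → y₂ ≤ d →
      |rect G x₁ x₂ y₁ y₂| ≤ C * (x₂ - x₁) ^ (1 / pt) * (y₂ - y₁) ^ (1 / qt))
    (M M' : ℕ) (t s : ℕ → ℕ → ℝ)
    (ht0 : ∀ k ≤ M, (∀ i j : ℕ, i ≤ j → j ≤ 2 ^ k → t k i ≤ t k j) ∧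
      t k 0 = a ∧ t k (2 ^ k) = b)
    (htmesh : ∀ k ≤ M, ∀ i < 2 ^ k, t k (i + 1) - t k i < 4 / 2 ^ k)
    (htnest : ∀ k, 1 ≤ k → k ≤ M → ∀ i ≤ 2 ^ (k - 1), t k (2 * i) = t (k - 1) i)
    (hs0 : ∀ k' ≤ M', (∀ i j : ℕ, i ≤ j → j ≤ 2 ^ k' → s k' i ≤ s k' j) ∧
      s k' 0 = c ∧ s k' (2 ^ k') = d)
    (hsmesh : ∀ k' ≤ M', ∀ j < 2 ^ k', s k' (j + 1) - s k' j < 4 / 2 ^ k')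
    (hsnest : ∀ k', 1 ≤ k' → k' ≤ M' → ∀ j ≤ 2 ^ (k' - 1), s k' (2 * j) = s (k' - 1) j)
    (S : ℕ → ℕ → ℝ)
    (hS : ∀ n n' : ℕ, S n n' =
      ∑ i ∈ Finset.range (2 ^ n), ∑ j ∈ Finset.range (2 ^ n'),
        F (t n (i + 1)) (s n' (j + 1)) *
          rect G (t n i) (t n (i + 1)) (s n' j) (s n' (j + 1)))
    (k k' : ℕ) (hk : 1 ≤ k) (hkM : k ≤ M) (hk' : 1 ≤ k') (hk'M : k' ≤ M') :
    |S k k' - S (k - 1) k' - S k (k' - 1) + S (k - 1) (k' - 1)| ≤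
      4 * C * 2 ^ (k + k') *
        (biVar1 p a b c d F / (2 : ℝ) ^ ((k : ℝ) / p)) ^ α *
        (biVar2 q a b c d F / (2 : ℝ) ^ ((k' : ℝ) / q)) ^ (1 - α) *
        ((2 : ℝ) ^ ((2 : ℝ) - (k : ℝ))) ^ (1 / pt) *
        ((2 : ℝ) ^ ((2 : ℝ) - (k' : ℝ))) ^ (1 / qt) := by
  classical
  open Finset in
  have hp0 : (0:ℝ) < p := lt_of_lt_of_le one_pos hp
  have hq0 : (0:ℝ) < q := lt_of_lt_of_le one_pos hq
  have h2mk : (2:ℕ) ^ k = 2 * 2 ^ (k - 1) := by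
    conv_lhs => rw [← Nat.succ_pred_eq_of_pos hk]
    rw [pow_succ, mul_comm, Nat.pred_eq_sub_one]
  have h2mk' : (2:ℕ) ^ k' = 2 * 2 ^ (k' - 1) := by
    conv_lhs => rw [← Nat.succ_pred_eq_of_pos hk']
    rw [pow_succ, mul_comm, Nat.pred_eq_sub_one]
  obtain ⟨htm, hta, htb⟩ := ht0 k hkM
  obtain ⟨hsm, hsc, hsd⟩ := hs0 k' hk'M
  obtain ⟨htm', hta', htb'⟩ := ht0 (k-1) (le_trans (Nat.sub_le k 1) hkM)
  obtain ⟨hsm', hsc', hsd'⟩ := hs0 (k'-1) (le_trans (Nat.sub_le k' 1) hk'M)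
  have hu_mem : ∀ l, l ≤ 2 ^ k → t k l ∈ Icc a b := fun l hl =>
    ⟨hta ▸ htm 0 l (Nat.zero_le _) hl, htb ▸ htm l (2 ^ k) hl le_rfl⟩
  have hv_mem : ∀ l, l ≤ 2 ^ k' → s k' l ∈ Icc c d := fun l hl =>
    ⟨hsc ▸ hsm 0 l (Nat.zero_le _) hl, hsd ▸ hsm l (2 ^ k') hl le_rfl⟩
  -- Step 1: combinatorial identity
  have e11 : S k k' = ∑ i ∈ Finset.range (2 * 2 ^ (k-1)), ∑ j ∈ Finset.range (2 * 2 ^ (k'-1)),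
      F (t k (i + 1)) (s k' (j + 1)) *
        rect G (t k i) (t k (i + 1)) (s k' j) (s k' (j + 1)) := by
    rw [hS k k', h2mk, h2mk']
  have e01 : S (k-1) k' = ∑ i ∈ Finset.range (2 ^ (k-1)), ∑ j ∈ Finset.range (2 * 2 ^ (k'-1)),
      F (t k (2 * (i + 1))) (s k' (j + 1)) *
        rect G (t k (2 * i)) (t k (2 * (i + 1))) (s k' j) (s k' (j + 1)) := by
    rw [hS (k-1) k', h2mk']
    refine Finset.sum_congr rfl fun i hi => Finset.sum_congr rfl fun j hj => ?_
    rw [htnest k hk hkM i (le_of_lt (Finset.mem_range.1 hi)),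
      htnest k hk hkM (i+1) (Nat.succ_le_of_lt (Finset.mem_range.1 hi))]
  have e10 : S k (k'-1) = ∑ i ∈ Finset.range (2 * 2 ^ (k-1)), ∑ j ∈ Finset.range (2 ^ (k'-1)),
      F (t k (i + 1)) (s k' (2 * (j + 1))) *
        rect G (t k i) (t k (i + 1)) (s k' (2 * j)) (s k' (2 * (j + 1))) := by
    rw [hS k (k'-1), h2mk]
    refine Finset.sum_congr rfl fun i hi => Finset.sum_congr rfl fun j hj => ?_
    rw [hsnest k' hk' hk'M j (le_of_lt (Finset.mem_range.1 hj)),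
      hsnest k' hk' hk'M (j+1) (Nat.succ_le_of_lt (Finset.mem_range.1 hj))]
  have e00 : S (k-1) (k'-1) = ∑ i ∈ Finset.range (2 ^ (k-1)), ∑ j ∈ Finset.range (2 ^ (k'-1)),
      F (t k (2 * (i + 1))) (s k' (2 * (j + 1))) *
        rect G (t k (2 * i)) (t k (2 * (i + 1))) (s k' (2 * j)) (s k' (2 * (j + 1))) := by
    rw [hS (k-1) (k'-1)]
    refine Finset.sum_congr rfl fun i hi => Finset.sum_congr rfl fun j hj => ?_
    rw [htnest k hk hkM i (le_of_lt (Finset.mem_range.1 hi)),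
      htnest k hk hkM (i+1) (Nat.succ_le_of_lt (Finset.mem_range.1 hi)),
      hsnest k' hk' hk'M j (le_of_lt (Finset.mem_range.1 hj)),
      hsnest k' hk' hk'M (j+1) (Nat.succ_le_of_lt (Finset.mem_range.1 hj))]
  have key : S k k' - S (k - 1) k' - S k (k' - 1) + S (k - 1) (k' - 1) =
      ∑ i ∈ Finset.range (2 ^ (k-1)), ∑ j ∈ Finset.range (2 ^ (k'-1)),
        rect F (t k (2 * i + 2)) (t k (2 * i + 1)) (s k' (2 * j + 2)) (s k' (2 * j + 1)) *
          rect G (t k (2 * i)) (t k (2 * i + 1)) (s k' (2 * j)) (s k' (2 * j + 1)) := by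
    rw [e11, e01, e10, e00]
    exact young_double_diff_identity (2 ^ (k-1)) (2 ^ (k'-1)) F G (t k) (s k')
  -- abbreviations
  set V1 := biVar1 p a b c d F with hV1def
  set V2 := biVar2 q a b c d F with hV2def
  set E1 := ((2 : ℝ) ^ ((2 : ℝ) - (k : ℝ))) ^ (1 / pt) with hE1def
  set E2 := ((2 : ℝ) ^ ((2 : ℝ) - (k' : ℝ))) ^ (1 / qt) with hE2def
  set X : ℕ → ℕ → ℝ := fun i j =>
    |rect F (t k (2 * i + 1)) (t k (2 * i + 2)) (s k' (2 * j + 1)) (s k' (2 * j + 2))|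
    with hXdef
  have hE1nonneg : 0 ≤ E1 := Real.rpow_nonneg (Real.rpow_nonneg (by norm_num) _) _
  have hE2nonneg : 0 ≤ E2 := Real.rpow_nonneg (Real.rpow_nonneg (by norm_num) _) _
  have hKg0 : 0 ≤ C * E1 * E2 := by positivity
  -- Step 2: per-cell bound on G increments
  have hGbound : ∀ i < 2 ^ (k-1), ∀ j < 2 ^ (k'-1),
      |rect G (t k (2 * i)) (t k (2 * i + 1)) (s k' (2 * j)) (s k' (2 * j + 1))| ≤
        C * E1 * E2 := by
    intro i hi j hj
    have hi1 : 2 * i + 1 ≤ 2 ^ k := by rw [h2mk]; omega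
    have hj1 : 2 * j + 1 ≤ 2 ^ k' := by rw [h2mk']; omega
    have hx01 : t k (2 * i) ≤ t k (2 * i + 1) := htm _ _ (Nat.le_succ _) hi1
    have hy01 : s k' (2 * j) ≤ s k' (2 * j + 1) := hsm _ _ (Nat.le_succ _) hj1
    have ht4 : t k (2 * i + 1) - t k (2 * i) ≤ (2:ℝ) ^ ((2:ℝ) - (k:ℝ)) := by
      have h4 : (2:ℝ) ^ ((2:ℝ) - (k:ℝ)) = 4 / 2 ^ k := by
        rw [Real.rpow_sub two_pos, Real.rpow_natCast]
        norm_num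
      rw [h4]
      exact le_of_lt (htmesh k hkM (2 * i) (by omega))
    have hs4 : s k' (2 * j + 1) - s k' (2 * j) ≤ (2:ℝ) ^ ((2:ℝ) - (k':ℝ)) := by
      have h4 : (2:ℝ) ^ ((2:ℝ) - (k':ℝ)) = 4 / 2 ^ k' := by
        rw [Real.rpow_sub two_pos, Real.rpow_natCast]
        norm_num
      rw [h4]
      exact le_of_lt (hsmesh k' hk'M (2 * j) (by omega))
    calc |rect G (t k (2 * i)) (t k (2 * i + 1)) (s k' (2 * j)) (s k' (2 * j + 1))|
        ≤ C * (t k (2 * i + 1) - t k (2 * i)) ^ (1 / pt) *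
            (s k' (2 * j + 1) - s k' (2 * j)) ^ (1 / qt) :=
          hG _ _ _ _ (hu_mem (2 * i) (le_trans (Nat.le_succ _) hi1)).1 hx01
            (hu_mem (2 * i + 1) hi1).2 (hv_mem (2 * j) (le_trans (Nat.le_succ _) hj1)).1
            hy01 (hv_mem (2 * j + 1) hj1).2
      _ ≤ C * E1 * E2 := by
          have h1pt : 0 ≤ 1 / pt := by positivity
          have h1qt : 0 ≤ 1 / qt := by positivity
          have b1 : (t k (2 * i + 1) - t k (2 * i)) ^ (1 / pt) ≤ E1 := by
            rw [hE1def]; exact Real.rpow_le_rpow (sub_nonneg.2 hx01) ht4 h1pt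
          have b2 : (s k' (2 * j + 1) - s k' (2 * j)) ^ (1 / qt) ≤ E2 := by
            rw [hE2def]; exact Real.rpow_le_rpow (sub_nonneg.2 hy01) hs4 h1qt
          exact mul_le_mul (mul_le_mul_of_nonneg_left b1 hC.le) b2
            (Real.rpow_nonneg (sub_nonneg.2 hy01) _) (by positivity)
  -- Step 3: reduce to sum of |rect F|
  have habs : |S k k' - S (k - 1) k' - S k (k' - 1) + S (k - 1) (k' - 1)| ≤
      (∑ pr ∈ Finset.range (2 ^ (k-1)) ×ˢ Finset.range (2 ^ (k'-1)), X pr.1 pr.2) *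
        (C * E1 * E2) := by
    rw [key, Finset.sum_product, Finset.sum_mul]
    refine le_trans (Finset.abs_sum_le_sum_abs _ _) (Finset.sum_le_sum fun i hi => ?_)
    rw [Finset.sum_mul]
    refine le_trans (Finset.abs_sum_le_sum_abs _ _) (Finset.sum_le_sum fun j hj => ?_)
    rw [abs_mul]
    have hflip : |rect F (t k (2 * i + 2)) (t k (2 * i + 1)) (s k' (2 * j + 2)) (s k' (2 * j + 1))|
        = X i j := by
      rw [hXdef]
      exact congrArg abs (by simp only [rect]; ring)
    rw [hflip]
    exact mul_le_mul_of_nonneg_left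
      (hGbound i (Finset.mem_range.1 hi) j (Finset.mem_range.1 hj)) (abs_nonneg _)
  -- weights
  set w1 := α / p with hw1def
  set w2 := (1 - α) / q with hw2def
  set w3 := 1 - w1 - w2 with hw3def
  have hw1 : 0 < w1 := div_pos hα0 hp0
  have hw2 : 0 < w2 := div_pos (by linarith) hq0
  have hw1le : w1 ≤ α := div_le_self hα0.le hp
  have hw2le : w2 ≤ 1 - α := div_le_self (by linarith) hq
  have hw3 : 0 ≤ w3 := by rw [hw3def]; linarith
  have hpw1 : p * w1 = α := by rw [hw1def]; field_simp
  have hqw2 : q * w2 = 1 - α := by rw [hw2def]; field_simp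
  -- Hölder
  have hhold := young_holder3 (Finset.range (2 ^ (k-1)) ×ˢ Finset.range (2 ^ (k'-1)))
    (fun pr => X pr.1 pr.2) (fun pr _ => abs_nonneg _) p q w1 w2 w3 hp0 hq0 hw1 hw2 hw3
    (by rw [hw3def]; ring) (by rw [hpw1, hqw2]; ring)
  -- nonnegativity of the bivariation norms
  have hcIcc : c ∈ Icc c d := ⟨le_refl c, hcd.le⟩
  have haIcc : a ∈ Icc a b := ⟨le_refl a, hab.le⟩
  have hmono2m : ∀ i j, i ≤ j → j ≤ 2 * 2 ^ (k-1) → t k i ≤ t k j := fun i j h1 h2 =>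
    htm i j h1 (le_of_le_of_eq h2 h2mk.symm)
  have hmono2m' : ∀ i j, i ≤ j → j ≤ 2 * 2 ^ (k'-1) → s k' i ≤ s k' j := fun i j h1 h2 =>
    hsm i j h1 (le_of_le_of_eq h2 h2mk'.symm)
  have htb2 : t k (2 * 2 ^ (k-1)) = b := by rw [← h2mk]; exact htb
  have hsd2 : s k' (2 * 2 ^ (k'-1)) = d := by rw [← h2mk']; exact hsd
  have hV1nonneg : 0 ≤ V1 := by
    have h0 : 0 ≤ pVarNorm p a b (fun x => F x c - F x c) :=
      Real.rpow_nonneg (young_grid_sSup_nonneg p a b _ (2 ^ k) (t k)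
        (fun i j h1 h2 => htm i j h1 h2) hta htb (hF1.1 c hcIcc c hcIcc)) _
    exact le_trans h0 (le_csSup hF1.2 ⟨c, hcIcc, c, hcIcc, rfl⟩)
  have hV2nonneg : 0 ≤ V2 := by
    have h0 : 0 ≤ pVarNorm q c d (fun y => F a y - F a y) :=
      Real.rpow_nonneg (young_grid_sSup_nonneg q c d _ (2 ^ k') (s k')
        (fun i j h1 h2 => hsm i j h1 h2) hsc hsd (hF2.1 a haIcc a haIcc)) _
    exact le_trans h0 (le_csSup hF2.2 ⟨a, haIcc, a, haIcc, rfl⟩)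
  -- bounds on the p- and q- sums
  have hXp : ∑ pr ∈ Finset.range (2 ^ (k-1)) ×ˢ Finset.range (2 ^ (k'-1)), X pr.1 pr.2 ^ p ≤
      (2 ^ (k'-1) : ℕ) * V1 ^ p := by
    rw [Finset.sum_product, Finset.sum_comm]
    have hbound : ∀ j ∈ Finset.range (2 ^ (k'-1)),
        ∑ i ∈ Finset.range (2 ^ (k-1)), X i j ^ p ≤ V1 ^ p := by
      intro j hj
      have hj2 : 2 * j + 2 ≤ 2 ^ k' := by rw [h2mk']; have := Finset.mem_range.1 hj; omega
      set g : ℝ → ℝ := fun x => F x (s k' (2 * j + 2)) - F x (s k' (2 * j + 1)) with hgdef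
      have hXg : ∀ i, X i j = |g (t k (2 * i + 2)) - g (t k (2 * i + 1))| := by
        intro i
        rw [hXdef, hgdef]
        exact congrArg abs (by simp only [rect]; ring)
      calc ∑ i ∈ Finset.range (2 ^ (k-1)), X i j ^ p
          = ∑ i ∈ Finset.range (2 ^ (k-1)), |g (t k (2 * i + 2)) - g (t k (2 * i + 1))| ^ p :=
            Finset.sum_congr rfl fun i _ => by rw [hXg i]
        _ ≤ V1 ^ p := young_sum_incr_le p a b hp0 g (2 ^ (k-1)) (t k) hmono2m hta htb2
            (hF1.1 _ (hv_mem _ hj2) _ (hv_mem _ (le_trans (Nat.le_succ _) hj2)))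
            V1 (le_csSup hF1.2 ⟨s k' (2 * j + 2), hv_mem _ hj2, s k' (2 * j + 1),
              hv_mem _ (le_trans (Nat.le_succ _) hj2), rfl⟩)
    calc ∑ j ∈ Finset.range (2 ^ (k'-1)), ∑ i ∈ Finset.range (2 ^ (k-1)), X i j ^ p
        ≤ ∑ _j ∈ Finset.range (2 ^ (k'-1)), V1 ^ p := Finset.sum_le_sum hbound
      _ = (2 ^ (k'-1) : ℕ) * V1 ^ p := by
          rw [Finset.sum_const, Finset.card_range, nsmul_eq_mul]
  have hXq : ∑ pr ∈ Finset.range (2 ^ (k-1)) ×ˢ Finset.range (2 ^ (k'-1)), X pr.1 pr.2 ^ q ≤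
      (2 ^ (k-1) : ℕ) * V2 ^ q := by
    rw [Finset.sum_product]
    have hbound : ∀ i ∈ Finset.range (2 ^ (k-1)),
        ∑ j ∈ Finset.range (2 ^ (k'-1)), X i j ^ q ≤ V2 ^ q := by
      intro i hi
      have hi2 : 2 * i + 2 ≤ 2 ^ k := by rw [h2mk]; have := Finset.mem_range.1 hi; omega
      set g : ℝ → ℝ := fun y => F (t k (2 * i + 2)) y - F (t k (2 * i + 1)) y with hgdef
      have hXg : ∀ j, X i j = |g (s k' (2 * j + 2)) - g (s k' (2 * j + 1))| := by
        intro j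
        rw [hXdef, hgdef]
        exact congrArg abs (by simp only [rect]; ring)
      calc ∑ j ∈ Finset.range (2 ^ (k'-1)), X i j ^ q
          = ∑ j ∈ Finset.range (2 ^ (k'-1)), |g (s k' (2 * j + 2)) - g (s k' (2 * j + 1))| ^ q :=
            Finset.sum_congr rfl fun j _ => by rw [hXg j]
        _ ≤ V2 ^ q := young_sum_incr_le q c d hq0 g (2 ^ (k'-1)) (s k') hmono2m' hsc hsd2
            (hF2.1 _ (hu_mem _ hi2) _ (hu_mem _ (le_trans (Nat.le_succ _) hi2)))
            V2 (le_csSup hF2.2 ⟨t k (2 * i + 2), hu_mem _ hi2, t k (2 * i + 1),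
              hu_mem _ (le_trans (Nat.le_succ _) hi2), rfl⟩)
    calc ∑ i ∈ Finset.range (2 ^ (k-1)), ∑ j ∈ Finset.range (2 ^ (k'-1)), X i j ^ q
        ≤ ∑ _i ∈ Finset.range (2 ^ (k-1)), V2 ^ q := Finset.sum_le_sum hbound
      _ = (2 ^ (k-1) : ℕ) * V2 ^ q := by
          rw [Finset.sum_const, Finset.card_range, nsmul_eq_mul]
  have hcard : ((Finset.range (2 ^ (k-1)) ×ˢ Finset.range (2 ^ (k'-1))).card : ℝ) =
      ((2 ^ (k-1) : ℕ) : ℝ) * ((2 ^ (k'-1) : ℕ) : ℝ) := by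
    rw [Finset.card_product, Finset.card_range, Finset.card_range]
    push_cast
    ring
  have hmono3 :
      (∑ pr ∈ Finset.range (2 ^ (k-1)) ×ˢ Finset.range (2 ^ (k'-1)), X pr.1 pr.2 ^ p) ^ w1 *
      (∑ pr ∈ Finset.range (2 ^ (k-1)) ×ˢ Finset.range (2 ^ (k'-1)), X pr.1 pr.2 ^ q) ^ w2 *
      (((Finset.range (2 ^ (k-1)) ×ˢ Finset.range (2 ^ (k'-1))).card : ℝ)) ^ w3 ≤
      (((2 ^ (k'-1) : ℕ) : ℝ) * V1 ^ p) ^ w1 * (((2 ^ (k-1) : ℕ) : ℝ) * V2 ^ q) ^ w2 *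
      (((2 ^ (k-1) : ℕ) : ℝ) * ((2 ^ (k'-1) : ℕ) : ℝ)) ^ w3 := by
    rw [hcard]
    have hs1 : 0 ≤ ∑ pr ∈ Finset.range (2 ^ (k-1)) ×ˢ Finset.range (2 ^ (k'-1)), X pr.1 pr.2 ^ p :=
      Finset.sum_nonneg fun pr _ => Real.rpow_nonneg (abs_nonneg _) _
    have hs2 : 0 ≤ ∑ pr ∈ Finset.range (2 ^ (k-1)) ×ˢ Finset.range (2 ^ (k'-1)), X pr.1 pr.2 ^ q :=
      Finset.sum_nonneg fun pr _ => Real.rpow_nonneg (abs_nonneg _) _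
    gcongr <;> first | exact hs1 | exact hs2 | exact hXp | exact hXq
  -- the power computation
  have hm_real : ((2 ^ (k-1) : ℕ) : ℝ) = (2:ℝ) ^ ((k:ℝ) - 1) := by
    rw [Nat.cast_pow, ← Real.rpow_natCast ((2:ℕ):ℝ) (k-1), Nat.cast_sub hk]
    norm_num
  have hm'_real : ((2 ^ (k'-1) : ℕ) : ℝ) = (2:ℝ) ^ ((k':ℝ) - 1) := by
    rw [Nat.cast_pow, ← Real.rpow_natCast ((2:ℕ):ℝ) (k'-1), Nat.cast_sub hk']
    norm_num
  have htwo : (0:ℝ) ≤ 2 := by norm_num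
  have f1 : (((2 ^ (k'-1) : ℕ) : ℝ) * V1 ^ p) ^ w1 =
      (2:ℝ) ^ (((k':ℝ) - 1) * w1) * V1 ^ α := by
    rw [Real.mul_rpow (by positivity) (Real.rpow_nonneg hV1nonneg _),
      ← Real.rpow_mul hV1nonneg, hpw1, hm'_real, ← Real.rpow_mul htwo]
  have f2 : (((2 ^ (k-1) : ℕ) : ℝ) * V2 ^ q) ^ w2 =
      (2:ℝ) ^ (((k:ℝ) - 1) * w2) * V2 ^ (1 - α) := by
    rw [Real.mul_rpow (by positivity) (Real.rpow_nonneg hV2nonneg _),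
      ← Real.rpow_mul hV2nonneg, hqw2, hm_real, ← Real.rpow_mul htwo]
  have f3 : (((2 ^ (k-1) : ℕ) : ℝ) * ((2 ^ (k'-1) : ℕ) : ℝ)) ^ w3 =
      (2:ℝ) ^ ((((k:ℝ) - 1) + ((k':ℝ) - 1)) * w3) := by
    rw [hm_real, hm'_real, ← Real.rpow_add two_pos, ← Real.rpow_mul htwo]
  have g1 : (V1 / (2:ℝ) ^ ((k:ℝ) / p)) ^ α = V1 ^ α * (2:ℝ) ^ (-(((k:ℝ) / p) * α)) := by
    rw [Real.div_rpow hV1nonneg (Real.rpow_nonneg htwo _), ← Real.rpow_mul htwo,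
      div_eq_mul_inv, ← Real.rpow_neg htwo]
  have g2 : (V2 / (2:ℝ) ^ ((k':ℝ) / q)) ^ (1 - α) =
      V2 ^ (1 - α) * (2:ℝ) ^ (-(((k':ℝ) / q) * (1 - α))) := by
    rw [Real.div_rpow hV2nonneg (Real.rpow_nonneg htwo _), ← Real.rpow_mul htwo,
      div_eq_mul_inv, ← Real.rpow_neg htwo]
  have g3 : (4:ℝ) * 2 ^ (k + k') = (2:ℝ) ^ ((2:ℝ) + ((k:ℝ) + (k':ℝ))) := by
    rw [Real.rpow_add two_pos]
    have h4 : ((2:ℝ) ^ (2:ℝ)) = 4 := by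
      rw [show ((2:ℝ)^(2:ℝ)) = ((2:ℝ)^((2:ℕ):ℝ)) by norm_num, Real.rpow_natCast]
      norm_num
    rw [h4]
    congr 1
    rw [← Real.rpow_natCast (2:ℝ) (k + k')]
    congr 1
    push_cast
    ring
  have hexp : ((k':ℝ) - 1) * w1 + ((k:ℝ) - 1) * w2 + (((k:ℝ) - 1) + ((k':ℝ) - 1)) * w3 ≤
      ((2:ℝ) + ((k:ℝ) + (k':ℝ))) + -(((k:ℝ) / p) * α) + -(((k':ℝ) / q) * (1 - α)) := by
    have e1 : ((k:ℝ) / p) * α = (k:ℝ) * w1 := by rw [hw1def]; ring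
    have e2 : ((k':ℝ) / q) * (1 - α) = (k':ℝ) * w2 := by rw [hw2def]; ring
    rw [e1, e2, hw3def]
    have hα1' : w1 ≤ 1 := by linarith
    have hα2' : w2 ≤ 1 := by linarith
    have hiden : ((2:ℝ) + ((k:ℝ) + (k':ℝ))) + -((k:ℝ) * w1) + -((k':ℝ) * w2) -
        (((k':ℝ) - 1) * w1 + ((k:ℝ) - 1) * w2 +
          (((k:ℝ) - 1) + ((k':ℝ) - 1)) * (1 - w1 - w2)) = 4 - w1 - w2 := by ring
    linarith [hiden, hα1', hα2']
  have hfinal : (((2 ^ (k'-1) : ℕ) : ℝ) * V1 ^ p) ^ w1 * (((2 ^ (k-1) : ℕ) : ℝ) * V2 ^ q) ^ w2 *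
      (((2 ^ (k-1) : ℕ) : ℝ) * ((2 ^ (k'-1) : ℕ) : ℝ)) ^ w3 ≤
      4 * 2 ^ (k + k') * (V1 / (2:ℝ) ^ ((k:ℝ) / p)) ^ α *
        (V2 / (2:ℝ) ^ ((k':ℝ) / q)) ^ (1 - α) := by
    calc (((2 ^ (k'-1) : ℕ) : ℝ) * V1 ^ p) ^ w1 * (((2 ^ (k-1) : ℕ) : ℝ) * V2 ^ q) ^ w2 *
        (((2 ^ (k-1) : ℕ) : ℝ) * ((2 ^ (k'-1) : ℕ) : ℝ)) ^ w3
        = V1 ^ α * V2 ^ (1 - α) *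
          ((2:ℝ) ^ (((k':ℝ) - 1) * w1) * (2:ℝ) ^ (((k:ℝ) - 1) * w2) *
            (2:ℝ) ^ ((((k:ℝ) - 1) + ((k':ℝ) - 1)) * w3)) := by
          rw [f1, f2, f3]; ring
      _ = V1 ^ α * V2 ^ (1 - α) *
          (2:ℝ) ^ (((k':ℝ) - 1) * w1 + ((k:ℝ) - 1) * w2 + (((k:ℝ) - 1) + ((k':ℝ) - 1)) * w3) := by
          rw [← Real.rpow_add two_pos, ← Real.rpow_add two_pos]
      _ ≤ V1 ^ α * V2 ^ (1 - α) *
          (2:ℝ) ^ (((2:ℝ) + ((k:ℝ) + (k':ℝ))) + -(((k:ℝ) / p) * α) + -(((k':ℝ) / q) * (1 - α))) := by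
          have h2le := Real.rpow_le_rpow_of_exponent_le one_le_two hexp
          exact mul_le_mul_of_nonneg_left h2le
            (mul_nonneg (Real.rpow_nonneg hV1nonneg _) (Real.rpow_nonneg hV2nonneg _))
      _ = 4 * 2 ^ (k + k') * (V1 / (2:ℝ) ^ ((k:ℝ) / p)) ^ α *
          (V2 / (2:ℝ) ^ ((k':ℝ) / q)) ^ (1 - α) := by
          rw [g1, g2, g3, Real.rpow_add two_pos, Real.rpow_add two_pos]
          ring
  -- final assembly
  calc |S k k' - S (k - 1) k' - S k (k' - 1) + S (k - 1) (k' - 1)|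
      ≤ (∑ pr ∈ Finset.range (2 ^ (k-1)) ×ˢ Finset.range (2 ^ (k'-1)), X pr.1 pr.2) *
          (C * E1 * E2) := habs
    _ ≤ ((∑ pr ∈ Finset.range (2 ^ (k-1)) ×ˢ Finset.range (2 ^ (k'-1)), X pr.1 pr.2 ^ p) ^ w1 *
          (∑ pr ∈ Finset.range (2 ^ (k-1)) ×ˢ Finset.range (2 ^ (k'-1)), X pr.1 pr.2 ^ q) ^ w2 *
          (((Finset.range (2 ^ (k-1)) ×ˢ Finset.range (2 ^ (k'-1))).card : ℝ)) ^ w3) *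
          (C * E1 * E2) := mul_le_mul_of_nonneg_right hhold hKg0
    _ ≤ ((((2 ^ (k'-1) : ℕ) : ℝ) * V1 ^ p) ^ w1 * (((2 ^ (k-1) : ℕ) : ℝ) * V2 ^ q) ^ w2 *
          (((2 ^ (k-1) : ℕ) : ℝ) * ((2 ^ (k'-1) : ℕ) : ℝ)) ^ w3) *
          (C * E1 * E2) := mul_le_mul_of_nonneg_right hmono3 hKg0
    _ ≤ (4 * 2 ^ (k + k') * (V1 / (2:ℝ) ^ ((k:ℝ) / p)) ^ α *
          (V2 / (2:ℝ) ^ ((k':ℝ) / q)) ^ (1 - α)) * (C * E1 * E2) :=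
        mul_le_mul_of_nonneg_right hfinal hKg0
    _ = 4 * C * 2 ^ (k + k') * (V1 / (2:ℝ) ^ ((k:ℝ) / p)) ^ α *
          (V2 / (2:ℝ) ^ ((k':ℝ) / q)) ^ (1 - α) * E1 * E2 := by ring
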